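/- arXiv:2201.05854 — 3 statements merged into one kernel-verified Lean document; each statement's English description precedes it below -/
import Mathlib

section
/- Fix real numbers δv > 0, 0 < δz < 2 and an integer N ≥ 2, and let X be the (N−1)×(N−1) tridiagonal Toeplitz matrix with diagonal c₂ = 5/(6δv), subdiagonal c₁ = (2+δz)/(24δv) and superdiagonal c₃ = (2−δz)/(24δv). Set x₀ = c₂/(2√(c₁c₃)) = 10/√(4−δz²). Then X is invertible, p_{N−1}(x₀) ≠ 0, and for all 1 ≤ q, q' ≤ N−1 the entries of the inverse are given by (X⁻¹)_{q,q'} = ((−1)^{q−q'} / √(c₁c₃)) · (√(c₁/c₃))^{q−q'} · p_{min(q,q')−1}(x₀) · p_{N−1−max(q,q')}(x₀) / p_{N−1}(x₀). -/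
/-- Tridiagonal Toeplitz matrix of size `n × n` with diagonal value `a`,
subdiagonal value `b` and superdiagonal value `d`. -/
def tridiag (n : ℕ) (b a d : ℝ) : Matrix (Fin n) (Fin n) ℝ :=
  Matrix.of fun q q' : Fin n =>
    if (q : ℤ) = (q' : ℤ) then a
    else if (q : ℤ) = (q' : ℤ) + 1 then b
    else if (q : ℤ) + 1 = (q' : ℤ) then d
    else 0

/-- The polynomial `p_n(x) = (2x)^n [1 + ∑_{k=1}^{⌊n/2⌋} (−1)^k C(n−k,k) (1/(4x²))^k]`. -/
noncomputable def pPoly (n : ℕ) (x : ℝ) : ℝ :=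
  (2 * x) ^ n *
    (1 + ∑ k ∈ Finset.Icc 1 (n / 2),
      (-1 : ℝ) ^ k * ((n - k).choose k : ℝ) * (1 / (4 * x ^ 2)) ^ k)

noncomputable def Saux (n : ℕ) (x : ℝ) : ℝ :=
  ∑ k ∈ Finset.range (n/2+1), (-1:ℝ)^k * ((n-k).choose k : ℝ) * (2*x)^(n-2*k)

lemma pPoly_eq_Saux (n : ℕ) (x : ℝ) (hx : x ≠ 0) : pPoly n x = Saux n x := by
  have h2x : (2*x) ≠ 0 := mul_ne_zero two_ne_zero hx
  unfold pPoly Saux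
  have hset : Finset.range (n/2+1) = insert 0 (Finset.Icc 1 (n/2)) := by
    ext k; simp [Finset.mem_range, Finset.mem_Icc]; omega
  rw [hset, Finset.sum_insert (by simp), mul_add, mul_one]
  congr 1
  · simp
  rw [Finset.mul_sum]
  apply Finset.sum_congr rfl
  intro k hk
  simp only [Finset.mem_Icc] at hk
  have h2k : 2*k ≤ n := by omega
  have key : (2*x)^n * (1/(4*x^2))^k = (2*x)^(n-2*k) := by
    have h4 : (1/(4*x^2))^k = ((2*x)^(2*k))⁻¹ := by
      rw [show (4*x^2) = (2*x)^2 by ring, one_div, inv_pow, pow_mul]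
    rw [h4, show (2*x)^n = (2*x)^(n-2*k) * (2*x)^(2*k) from by rw [← pow_add]; congr 1; omega,
      mul_inv_cancel_right₀ (pow_ne_zero _ h2x)]
  rw [show (2*x)^n * ((-1:ℝ)^k * ((n-k).choose k:ℝ) * (1/(4*x^2))^k)
      = (-1:ℝ)^k * ((n-k).choose k:ℝ) * ((2*x)^n * (1/(4*x^2))^k) from by ring, key]

lemma Saux_rec (n : ℕ) (x : ℝ) : Saux (n+2) x = 2*x*Saux (n+1) x - Saux n x := by
  have e1 : Saux (n+2) x
      = (2*x)^(n+2)
        + ((∑ j ∈ Finset.range (n/2+1),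
            (-1:ℝ)^(j+1) * ((n-j).choose (j+1) : ℝ) * (2*x)^(n-2*j))
        - Saux n x) := by
    unfold Saux
    rw [show (n+2)/2 + 1 = (n/2+1) + 1 by omega, Finset.sum_range_succ']
    have step : ∀ j ∈ Finset.range (n/2+1),
        (-1:ℝ)^(j+1) * (((n+2)-(j+1)).choose (j+1) : ℝ) * (2*x)^((n+2)-2*(j+1))
        = (-1:ℝ)^(j+1) * ((n-j).choose (j+1) : ℝ) * (2*x)^(n-2*j)
          - (-1:ℝ)^j * ((n-j).choose j : ℝ) * (2*x)^(n-2*j) := by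
      intro j hj
      simp only [Finset.mem_range] at hj
      rw [show (n+2)-(j+1) = (n-j)+1 by omega, show (n+2)-2*(j+1) = n-2*j by omega,
        Nat.choose_succ_succ]
      push_cast
      ring
    rw [Finset.sum_congr rfl step, Finset.sum_sub_distrib]
    simp only [pow_zero, Nat.mul_zero, Nat.sub_zero, Nat.choose_zero_right, Nat.cast_one, one_mul, mul_one]
    ring
  have e2 : 2*x*Saux (n+1) x
      = (2*x)^(n+2)
        + ∑ j ∈ Finset.range ((n+1)/2),
            (-1:ℝ)^(j+1) * ((n-j).choose (j+1) : ℝ) * (2*x)^(n-2*j) := by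
    unfold Saux
    rw [Finset.mul_sum]
    have step1 : ∀ k ∈ Finset.range ((n+1)/2+1),
        2*x*((-1:ℝ)^k * (((n+1)-k).choose k : ℝ) * (2*x)^((n+1)-2*k))
        = (-1:ℝ)^k * (((n+1)-k).choose k : ℝ) * (2*x)^((n+2)-2*k) := by
      intro k hk
      simp only [Finset.mem_range] at hk
      rw [show (n+2)-2*k = ((n+1)-2*k)+1 by omega, pow_succ]
      ring
    rw [Finset.sum_congr rfl step1, Finset.sum_range_succ']
    have step2 : ∀ j ∈ Finset.range ((n+1)/2),
        (-1:ℝ)^(j+1) * (((n+1)-(j+1)).choose (j+1) : ℝ) * (2*x)^((n+2)-2*(j+1))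
        = (-1:ℝ)^(j+1) * ((n-j).choose (j+1) : ℝ) * (2*x)^(n-2*j) := by
      intro j hj
      simp only [Finset.mem_range] at hj
      rw [show (n+1)-(j+1) = n-j by omega, show (n+2)-2*(j+1) = n-2*j by omega]
    rw [Finset.sum_congr rfl step2]
    simp only [pow_zero, Nat.mul_zero, Nat.sub_zero, Nat.choose_zero_right, Nat.cast_one, one_mul, mul_one]
    ring
  have e3 : ∑ j ∈ Finset.range ((n+1)/2),
        (-1:ℝ)^(j+1) * ((n-j).choose (j+1) : ℝ) * (2*x)^(n-2*j)
      = ∑ j ∈ Finset.range (n/2+1),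
        (-1:ℝ)^(j+1) * ((n-j).choose (j+1) : ℝ) * (2*x)^(n-2*j) := by
    apply Finset.sum_subset
    · intro j hj; simp only [Finset.mem_range] at *; omega
    · intro j hj hj'
      simp only [Finset.mem_range] at hj hj'
      rw [show ((n-j).choose (j+1) : ℝ) = 0 from by
        norm_cast; apply Nat.choose_eq_zero_of_lt; omega]
      ring
  rw [e1, e2, ← e3]
  ring

lemma pPoly_zero' (x : ℝ) : pPoly 0 x = 1 := by simp [pPoly]

lemma pPoly_one' (x : ℝ) : pPoly 1 x = 2*x := by simp [pPoly]

lemma pPoly_rec (x : ℝ) (hx : x ≠ 0) (n : ℕ) :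
    pPoly (n+2) x = 2*x*pPoly (n+1) x - pPoly n x := by
  rw [pPoly_eq_Saux _ _ hx, pPoly_eq_Saux _ _ hx, pPoly_eq_Saux _ _ hx, Saux_rec]

noncomputable def pz (x : ℝ) (k : ℤ) : ℝ := if 0 ≤ k then pPoly k.toNat x else 0

lemma pz_neg_one (x : ℝ) : pz x (-1) = 0 := by simp [pz]

lemma pz_ofNat (x : ℝ) (m : ℕ) : pz x (m : ℤ) = pPoly m x := by simp [pz]

lemma pz_rec (x : ℝ) (hx : x ≠ 0) (k : ℤ) (hk : 0 ≤ k) :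
    pz x (k+1) = 2*x*pz x k - pz x (k-1) := by
  obtain ⟨m, rfl⟩ : ∃ m : ℕ, k = (m : ℤ) := ⟨k.toNat, (Int.toNat_of_nonneg hk).symm⟩
  cases m with
  | zero =>
    simp only [Nat.cast_zero, zero_add, zero_sub]
    rw [show pz x 1 = pPoly 1 x from by norm_num [pz],
      show pz x 0 = pPoly 0 x from by norm_num [pz], pz_neg_one, pPoly_one', pPoly_zero']
    ring
  | succ m =>
    rw [show ((m+1:ℕ):ℤ)+1 = ((m+2:ℕ):ℤ) by push_cast; ring,
      show ((m+1:ℕ):ℤ)-1 = ((m:ℕ):ℤ) by push_cast; ring,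
      pz_ofNat, pz_ofNat, pz_ofNat]
    exact pPoly_rec x hx m

lemma pPoly_pos_aux (x : ℝ) (hx : 1 < x) :
    ∀ m : ℕ, 0 < pPoly m x ∧ pPoly m x < pPoly (m+1) x := by
  intro m
  induction m with
  | zero =>
    rw [pPoly_zero', pPoly_one']
    constructor <;> linarith
  | succ m ih =>
    obtain ⟨h1, h2⟩ := ih
    refine ⟨by linarith, ?_⟩
    rw [pPoly_rec x (by linarith) m]
    nlinarith

lemma pz_pos (x : ℝ) (hx : 1 < x) (k : ℤ) (hk : 0 ≤ k) : 0 < pz x k := by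
  obtain ⟨m, rfl⟩ : ∃ m : ℕ, k = (m : ℤ) := ⟨k.toNat, (Int.toNat_of_nonneg hk).symm⟩
  rw [pz_ofNat]
  exact (pPoly_pos_aux x hx m).1

lemma pz_identity (x : ℝ) (hx : x ≠ 0) (n : ℕ) (hn : 1 ≤ n) :
    ∀ t : ℕ, (t:ℤ) ≤ (n:ℤ) - 1 →
      pz x ((t:ℤ)+1) * pz x ((n:ℤ)-1-(t:ℤ)) - pz x (t:ℤ) * pz x ((n:ℤ)-2-(t:ℤ))
        = pz x (n:ℤ) := by
  intro t
  induction t with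
  | zero =>
    intro _
    have h := pz_rec x hx ((n:ℤ)-1) (by omega)
    rw [show ((n:ℤ)-1)+1 = (n:ℤ) by ring, show ((n:ℤ)-1)-1 = (n:ℤ)-2 by ring] at h
    rw [show ((0:ℕ):ℤ)+1 = ((1:ℕ):ℤ) by norm_num, show ((0:ℕ):ℤ) = ((0:ℕ):ℤ) from rfl]
    rw [show ((n:ℤ)-1-((0:ℕ):ℤ)) = (n:ℤ)-1 by norm_num,
      show ((n:ℤ)-2-((0:ℕ):ℤ)) = (n:ℤ)-2 by norm_num, pz_ofNat, pz_ofNat,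
      pPoly_one', pPoly_zero']
    linear_combination -h
  | succ t ih =>
    intro ht
    have htn : (t:ℤ) ≤ (n:ℤ) - 1 := by push_cast at ht ⊢; omega
    have ih' := ih htn
    have h1 := pz_rec x hx ((t:ℤ)+1) (by omega)
    have h2 := pz_rec x hx ((n:ℤ)-2-(t:ℤ)) (by push_cast at ht; omega)
    rw [show ((t:ℤ)+1)-1 = (t:ℤ) by ring] at h1
    rw [show ((n:ℤ)-2-(t:ℤ))+1 = (n:ℤ)-1-(t:ℤ) by ring,
      show ((n:ℤ)-2-(t:ℤ))-1 = (n:ℤ)-2-((t:ℤ)+1) by ring] at h2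
    rw [show ((t+1:ℕ):ℤ) = (t:ℤ)+1 by push_cast; ring,
      show (n:ℤ)-1-((t:ℤ)+1) = (n:ℤ)-2-(t:ℤ) by ring]
    linear_combination ih' + pz x ((n:ℤ)-2-(t:ℤ)) * h1 - pz x ((t:ℤ)+1) * h2


lemma fin_sum_ite (n : ℕ) (c : ℤ) (v : ℝ) :
    (∑ k : Fin n, if (k : ℤ) = c then v else 0) = if 0 ≤ c ∧ c < (n:ℤ) then v else 0 := by
  by_cases h : 0 ≤ c ∧ c < (n:ℤ)
  · rw [if_pos h]
    have hc : c.toNat < n := by omega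
    rw [Finset.sum_eq_single (⟨c.toNat, hc⟩ : Fin n)]
    · rw [if_pos (by simp; omega)]
    · intro k _ hk
      rw [if_neg]
      intro hkc
      apply hk
      apply Fin.ext
      have : ((k:ℕ):ℤ) = c := hkc
      simp
      omega
    · intro hk; exact absurd (Finset.mem_univ _) hk
  · rw [if_neg h]
    apply Finset.sum_eq_zero
    intro k _
    rw [if_neg]
    intro hkc
    have h1 : ((k:ℕ):ℤ) = c := hkc
    have h2 := k.isLt
    omega

lemma tridiag_row (n : ℕ) (b a d : ℝ) (g : ℤ → ℝ) (hg1 : g (-1) = 0) (hg2 : g (n:ℤ) = 0)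
    (q : Fin n) :
    (∑ k : Fin n, tridiag n b a d q k * g (k:ℤ)) =
      b * g ((q:ℤ)-1) + a * g (q:ℤ) + d * g ((q:ℤ)+1) := by
  have hsplit : ∀ k : Fin n, tridiag n b a d q k * g (k:ℤ) =
      (if (k:ℤ) = (q:ℤ) then a * g (q:ℤ) else 0)
      + ((if (k:ℤ) = (q:ℤ)-1 then b * g ((q:ℤ)-1) else 0)
      + (if (k:ℤ) = (q:ℤ)+1 then d * g ((q:ℤ)+1) else 0)) := by
    intro k
    unfold tridiag
    simp only [Matrix.of_apply]
    by_cases h1 : (q:ℤ) = (k:ℤ)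
    · rw [if_pos h1, if_pos (by omega : (k:ℤ) = (q:ℤ)), if_neg (by omega), if_neg (by omega),
        show (k:ℤ) = (q:ℤ) from by omega]
      ring
    · rw [if_neg h1]
      by_cases h2 : (q:ℤ) = (k:ℤ)+1
      · rw [if_pos h2, if_neg (by omega), if_pos (by omega : (k:ℤ) = (q:ℤ)-1),
          if_neg (by omega), show (k:ℤ) = (q:ℤ)-1 from by omega]
        ring
      · rw [if_neg h2]
        by_cases h3 : (q:ℤ)+1 = (k:ℤ)
        · rw [if_pos h3, if_neg (by omega), if_neg (by omega),
            if_pos (by omega : (k:ℤ) = (q:ℤ)+1), show (k:ℤ) = (q:ℤ)+1 from by omega]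
          ring
        · rw [if_neg h3, if_neg (by omega), if_neg (by omega), if_neg (by omega)]
          ring
  rw [Finset.sum_congr rfl (fun k _ => hsplit k), Finset.sum_add_distrib,
    Finset.sum_add_distrib, fin_sum_ite, fin_sum_ite, fin_sum_ite]
  have hq0 : (0:ℤ) ≤ (q:ℤ) := by positivity
  have hqn : (q:ℤ) < (n:ℤ) := by exact_mod_cast q.isLt
  rw [if_pos ⟨hq0, hqn⟩]
  by_cases hb : (0:ℤ) ≤ (q:ℤ)-1 ∧ (q:ℤ)-1 < (n:ℤ)
  · rw [if_pos hb]
    by_cases hd : (0:ℤ) ≤ (q:ℤ)+1 ∧ (q:ℤ)+1 < (n:ℤ)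
    · rw [if_pos hd]; ring
    · rw [if_neg hd, show (q:ℤ)+1 = (n:ℤ) from by omega, hg2]; ring
  · rw [if_neg hb, show (q:ℤ)-1 = (-1:ℤ) from by omega, hg1]
    by_cases hd : (0:ℤ) ≤ (q:ℤ)+1 ∧ (q:ℤ)+1 < (n:ℤ)
    · rw [if_pos hd]; ring
    · rw [if_neg hd, show (q:ℤ)+1 = (n:ℤ) from by omega, hg2]; ring

noncomputable def Gfun (x s u : ℝ) (n q' k : ℤ) : ℝ :=
  s⁻¹ * u ^ (k - q') * pz x (min k q') * pz x (n - 1 - max k q') / pz x n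

/-- explicit formula for the entries of the inverse of the
tridiagonal Toeplitz matrix `X` (indices `q, q'` below are 0-based, so the
paper's `q ∈ {1,…,N−1}` corresponds to `q.val + 1`). -/
theorem stmt4 (δv δz : ℝ) (hδv : 0 < δv) (hδz : 0 < δz) (hδz2 : δz < 2)
    (N : ℕ) (hN : 2 ≤ N)
    (c₁ c₂ c₃ x₀ : ℝ)
    (hc₁ : c₁ = (2 + δz) / (24 * δv)) (hc₂ : c₂ = 5 / (6 * δv))
    (hc₃ : c₃ = (2 - δz) / (24 * δv))
    (hx₀ : x₀ = c₂ / (2 * Real.sqrt (c₁ * c₃))) :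
    x₀ = 10 / Real.sqrt (4 - δz ^ 2) ∧
    IsUnit (tridiag (N - 1) c₁ c₂ c₃) ∧
    pPoly (N - 1) x₀ ≠ 0 ∧
    ∀ q q' : Fin (N - 1),
      (tridiag (N - 1) c₁ c₂ c₃)⁻¹ q q' =
        (-1 : ℝ) ^ ((q : ℤ) - (q' : ℤ)) / Real.sqrt (c₁ * c₃) *
          Real.sqrt (c₁ / c₃) ^ ((q : ℤ) - (q' : ℤ)) *
          (pPoly (min (q : ℕ) (q' : ℕ)) x₀ *
            pPoly (N - 2 - max (q : ℕ) (q' : ℕ)) x₀ / pPoly (N - 1) x₀) := by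
  have hδv' : δv ≠ 0 := ne_of_gt hδv
  have h4 : (0:ℝ) < 4 - δz^2 := by nlinarith
  have hsq4 : (0:ℝ) < Real.sqrt (4 - δz^2) := Real.sqrt_pos.mpr h4
  have hc₁0 : 0 < c₁ := by rw [hc₁]; apply div_pos (by linarith) (by linarith)
  have hc₃0 : 0 < c₃ := by rw [hc₃]; apply div_pos (by linarith) (by linarith)
  set s := Real.sqrt (c₁ * c₃) with hs_def
  have hspos : 0 < s := Real.sqrt_pos.mpr (mul_pos hc₁0 hc₃0)
  have hsval : s = Real.sqrt (4 - δz^2) / (24*δv) := by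
    rw [hs_def, show c₁ * c₃ = (Real.sqrt (4-δz^2)/(24*δv))^2 from by
      rw [div_pow, Real.sq_sqrt h4.le, hc₁, hc₃]; field_simp; ring]
    exact Real.sqrt_sq (by positivity)
  have hxval : x₀ = 10 / Real.sqrt (4 - δz^2) := by
    rw [hx₀, hc₂, hsval]
    rw [div_eq_div_iff (by positivity) (by positivity)]
    field_simp
    ring
  have hx1 : 1 < x₀ := by
    rw [hxval, lt_div_iff₀ hsq4]
    nlinarith [Real.sq_sqrt h4.le, Real.sqrt_nonneg (4-δz^2)]
  have hx0 : x₀ ≠ 0 := by intro h; rw [h] at hx1; linarith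
  set r := Real.sqrt (c₁ / c₃) with hr_def
  have hrpos : 0 < r := Real.sqrt_pos.mpr (div_pos hc₁0 hc₃0)
  set u : ℝ := -r with hu_def
  have hu0 : u ≠ 0 := by rw [hu_def]; exact neg_ne_zero.mpr (ne_of_gt hrpos)
  have hsr : s * r = c₁ := by
    rw [hs_def, hr_def, ← Real.sqrt_mul (mul_pos hc₁0 hc₃0).le,
      show c₁*c₃*(c₁/c₃) = c₁^2 from by field_simp, Real.sqrt_sq hc₁0.le]
  have hsr' : s / r = c₃ := by
    rw [hs_def, hr_def, ← Real.sqrt_div (mul_pos hc₁0 hc₃0).le,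
      show c₁*c₃/(c₁/c₃) = c₃^2 from by field_simp, Real.sqrt_sq hc₃0.le]
  have hc₁u : c₁ * u⁻¹ = -s := by
    rw [hu_def, ← hsr]; field_simp
  have hc₃u : c₃ * u = -s := by
    rw [hu_def, ← hsr']; field_simp
  have hc₂s : c₂ = 2 * x₀ * s := by
    rw [hx₀]; field_simp
  -- pz facts
  have hrec : ∀ k : ℤ, 0 ≤ k → pz x₀ (k+1) = 2*x₀*pz x₀ k - pz x₀ (k-1) := pz_rec x₀ hx0
  have hpos : ∀ k : ℤ, 0 ≤ k → 0 < pz x₀ k := pz_pos x₀ hx1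
  set n : ℕ := N - 1 with hn_def
  have hn1 : 1 ≤ n := by omega
  have hpzn : pz x₀ (n:ℤ) ≠ 0 := ne_of_gt (hpos _ (by positivity))
  -- the candidate inverse
  set B : Matrix (Fin n) (Fin n) ℝ :=
    Matrix.of (fun q q' : Fin n => Gfun x₀ s u (n:ℤ) (q':ℤ) (q:ℤ)) with hB_def
  have hmain : tridiag n c₁ c₂ c₃ * B = 1 := by
    ext q q'
    rw [Matrix.mul_apply]
    have hq0 : (0:ℤ) ≤ (q:ℤ) := by positivity
    have hq'0 : (0:ℤ) ≤ (q':ℤ) := by positivity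
    have hqn : (q:ℤ) < (n:ℤ) := by exact_mod_cast q.isLt
    have hq'n : (q':ℤ) < (n:ℤ) := by exact_mod_cast q'.isLt
    have hG1 : Gfun x₀ s u (n:ℤ) (q':ℤ) (-1) = 0 := by
      unfold Gfun
      rw [show min (-1) (q':ℤ) = -1 from by omega, pz_neg_one]
      ring
    have hG2 : Gfun x₀ s u (n:ℤ) (q':ℤ) (n:ℤ) = 0 := by
      unfold Gfun
      rw [show max (n:ℤ) (q':ℤ) = (n:ℤ) from by omega,
        show (n:ℤ) - 1 - (n:ℤ) = -1 from by ring, pz_neg_one]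
      ring
    rw [show (∑ k : Fin n, tridiag n c₁ c₂ c₃ q k * B k q')
        = ∑ k : Fin n, tridiag n c₁ c₂ c₃ q k * Gfun x₀ s u (n:ℤ) (q':ℤ) (k:ℤ) from rfl,
      tridiag_row n c₁ c₂ c₃ (fun k => Gfun x₀ s u (n:ℤ) (q':ℤ) k) hG1 hG2 q,
      Matrix.one_apply]
    rcases lt_trichotomy ((q:ℤ)) ((q':ℤ)) with h | h | h
    · rw [if_neg (by intro hqe; rw [hqe] at h; omega)]
      unfold Gfun
      rw [show min ((q:ℤ)-1) (q':ℤ) = (q:ℤ)-1 from by omega,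
        show min ((q:ℤ)) (q':ℤ) = (q:ℤ) from by omega,
        show min ((q:ℤ)+1) (q':ℤ) = (q:ℤ)+1 from by omega,
        show max ((q:ℤ)-1) (q':ℤ) = (q':ℤ) from by omega,
        show max ((q:ℤ)) (q':ℤ) = (q':ℤ) from by omega,
        show max ((q:ℤ)+1) (q':ℤ) = (q':ℤ) from by omega,
        show (q:ℤ)-1-(q':ℤ) = ((q:ℤ)-(q':ℤ))-1 from by ring,
        show (q:ℤ)+1-(q':ℤ) = ((q:ℤ)-(q':ℤ))+1 from by ring,
        zpow_sub_one₀ hu0, zpow_add_one₀ hu0,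
        hrec (q:ℤ) hq0]
      linear_combination (s⁻¹ * u ^ ((q:ℤ)-(q':ℤ)) * pz x₀ ((q:ℤ)-1)
          * pz x₀ ((n:ℤ)-1-(q':ℤ)) / pz x₀ (n:ℤ)) * hc₁u
        + (s⁻¹ * u ^ ((q:ℤ)-(q':ℤ)) * (2*x₀*pz x₀ (q:ℤ) - pz x₀ ((q:ℤ)-1))
          * pz x₀ ((n:ℤ)-1-(q':ℤ)) / pz x₀ (n:ℤ)) * hc₃u
        + (s⁻¹ * u ^ ((q:ℤ)-(q':ℤ)) * pz x₀ (q:ℤ)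
          * pz x₀ ((n:ℤ)-1-(q':ℤ)) / pz x₀ (n:ℤ)) * hc₂s
    · have hqq : q = q' := by
        apply Fin.ext
        omega
      rw [if_pos hqq, ← h]
      unfold Gfun
      rw [show min ((q:ℤ)-1) (q:ℤ) = (q:ℤ)-1 from by omega,
        show min ((q:ℤ)) (q:ℤ) = (q:ℤ) from by omega,
        show min ((q:ℤ)+1) (q:ℤ) = (q:ℤ) from by omega,
        show max ((q:ℤ)-1) (q:ℤ) = (q:ℤ) from by omega,
        show max ((q:ℤ)) (q:ℤ) = (q:ℤ) from by omega,
        show max ((q:ℤ)+1) (q:ℤ) = (q:ℤ)+1 from by omega,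
        show (q:ℤ)-1-(q:ℤ) = (-1:ℤ) from by ring,
        show (q:ℤ)-(q:ℤ) = (0:ℤ) from by ring,
        show (q:ℤ)+1-(q:ℤ) = (1:ℤ) from by ring,
        show (n:ℤ)-1-((q:ℤ)+1) = (n:ℤ)-2-(q:ℤ) from by ring,
        zpow_neg_one, zpow_zero, zpow_one]
      have hE := pz_identity x₀ hx0 n hn1 (q:ℕ) (by omega)
      have hrq := hrec (q:ℤ) hq0
      have key : c₁ * u⁻¹ * (pz x₀ ((q:ℤ)-1) * pz x₀ ((n:ℤ)-1-(q:ℤ)))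
          + c₂ * (pz x₀ (q:ℤ) * pz x₀ ((n:ℤ)-1-(q:ℤ)))
          + c₃ * u * (pz x₀ (q:ℤ) * pz x₀ ((n:ℤ)-2-(q:ℤ)))
          = s * pz x₀ (n:ℤ) := by
        rw [hc₂s]
        linear_combination (pz x₀ ((q:ℤ)-1) * pz x₀ ((n:ℤ)-1-(q:ℤ))) * hc₁u
          + (pz x₀ (q:ℤ) * pz x₀ ((n:ℤ)-2-(q:ℤ))) * hc₃u
          + s * hE - s * pz x₀ ((n:ℤ)-1-(q:ℤ)) * hrq
      calc c₁ * (s⁻¹ * u⁻¹ * pz x₀ ((q:ℤ)-1) * pz x₀ ((n:ℤ)-1-(q:ℤ)) / pz x₀ (n:ℤ))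
            + c₂ * (s⁻¹ * 1 * pz x₀ (q:ℤ) * pz x₀ ((n:ℤ)-1-(q:ℤ)) / pz x₀ (n:ℤ))
            + c₃ * (s⁻¹ * u * pz x₀ (q:ℤ) * pz x₀ ((n:ℤ)-2-(q:ℤ)) / pz x₀ (n:ℤ))
          = (c₁ * u⁻¹ * (pz x₀ ((q:ℤ)-1) * pz x₀ ((n:ℤ)-1-(q:ℤ)))
            + c₂ * (pz x₀ (q:ℤ) * pz x₀ ((n:ℤ)-1-(q:ℤ)))
            + c₃ * u * (pz x₀ (q:ℤ) * pz x₀ ((n:ℤ)-2-(q:ℤ)))) * (s⁻¹ / pz x₀ (n:ℤ)) := by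
            ring
        _ = (s * pz x₀ (n:ℤ)) * (s⁻¹ / pz x₀ (n:ℤ)) := by rw [key]
        _ = 1 := by field_simp
    · rw [if_neg (by intro hqe; rw [hqe] at h; omega)]
      unfold Gfun
      have hrq := hrec ((n:ℤ)-1-(q:ℤ)) (by omega)
      rw [show ((n:ℤ)-1-(q:ℤ))+1 = (n:ℤ)-1-((q:ℤ)-1) from by ring,
        show ((n:ℤ)-1-(q:ℤ))-1 = (n:ℤ)-1-((q:ℤ)+1) from by ring] at hrq
      rw [show min ((q:ℤ)-1) (q':ℤ) = (q':ℤ) from by omega,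
        show min ((q:ℤ)) (q':ℤ) = (q':ℤ) from by omega,
        show min ((q:ℤ)+1) (q':ℤ) = (q':ℤ) from by omega,
        show max ((q:ℤ)-1) (q':ℤ) = (q:ℤ)-1 from by omega,
        show max ((q:ℤ)) (q':ℤ) = (q:ℤ) from by omega,
        show max ((q:ℤ)+1) (q':ℤ) = (q:ℤ)+1 from by omega,
        show (q:ℤ)-1-(q':ℤ) = ((q:ℤ)-(q':ℤ))-1 from by ring,
        show (q:ℤ)+1-(q':ℤ) = ((q:ℤ)-(q':ℤ))+1 from by ring,
        zpow_sub_one₀ hu0, zpow_add_one₀ hu0, hrq]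
      linear_combination (s⁻¹ * u ^ ((q:ℤ)-(q':ℤ)) * pz x₀ (q':ℤ)
          * (2*x₀*pz x₀ ((n:ℤ)-1-(q:ℤ)) - pz x₀ ((n:ℤ)-1-((q:ℤ)+1))) / pz x₀ (n:ℤ)) * hc₁u
        + (s⁻¹ * u ^ ((q:ℤ)-(q':ℤ)) * pz x₀ (q':ℤ)
          * pz x₀ ((n:ℤ)-1-((q:ℤ)+1)) / pz x₀ (n:ℤ)) * hc₃u
        + (s⁻¹ * u ^ ((q:ℤ)-(q':ℤ)) * pz x₀ (q':ℤ)
          * pz x₀ ((n:ℤ)-1-(q:ℤ)) / pz x₀ (n:ℤ)) * hc₂s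
  refine ⟨hxval, (Matrix.isUnit_iff_isUnit_det _).mpr (Matrix.isUnit_det_of_right_inverse hmain),
    ne_of_gt (pPoly_pos_aux x₀ hx1 (N-1)).1, ?_⟩
  intro q q'
  rw [Matrix.inv_eq_right_inv hmain]
  show Gfun x₀ s u (n:ℤ) (q':ℤ) (q:ℤ) = _
  unfold Gfun
  have hq0 : (0:ℤ) ≤ (q:ℤ) := by positivity
  have hq'0 : (0:ℤ) ≤ (q':ℤ) := by positivity
  have hqn : (q:ℤ) < (n:ℤ) := by exact_mod_cast q.isLt
  have hq'n : (q':ℤ) < (n:ℤ) := by exact_mod_cast q'.isLt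
  rw [show min ((q:ℤ)) ((q':ℤ)) = ((min (q:ℕ) (q':ℕ) : ℕ) : ℤ) from by push_cast; omega,
    show (n:ℤ)-1-max ((q:ℤ)) ((q':ℤ)) = ((N - 2 - max (q:ℕ) (q':ℕ) : ℕ) : ℤ) from by
      push_cast [hn_def]; omega,
    show (n:ℤ) = ((N-1 : ℕ):ℤ) from by rw [hn_def],
    pz_ofNat, pz_ofNat, pz_ofNat,
    show u = (-1) * r from by rw [hu_def]; ring, mul_zpow]
  ring
end

section
/- Fix real numbers δv > 0, 0 < δz < 2 and an integer N ≥ 2, and let X be the (N−1)×(N−1) tridiagonal Toeplitz matrix with diagonal c₂ = 5/(6δv), subdiagonal c₁ = (2+δz)/(24δv) and superdiagonal c₃ = (2−δz)/(24δv). Then the entries of X⁻¹ alternate in sign in checkerboard fashion: for all 1 ≤ q, q' ≤ N−1 one has (−1)^{q−q'} · (X⁻¹)_{q,q'} > 0. In particular the diagonal entries of X⁻¹ are positive and each entry differs in sign from its horizontal and vertical neighbours. -/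
namespace Stmt6aux

def psi (a c : ℝ) : ℕ → ℝ
  | 0 => 0
  | 1 => 1
  | (k+2) => a * psi a c (k+1) - c * psi a c k

variable (a c : ℝ)

lemma psi_zero : psi a c 0 = 0 := rfl
lemma psi_one : psi a c 1 = 1 := rfl
lemma psi_rec (k : ℕ) : psi a c (k+2) = a * psi a c (k+1) - c * psi a c k := rfl

lemma psi_pos_aux (ha : 0 < a) (hc : 0 ≤ c) (h4 : 4*c ≤ a^2) :
    ∀ k, 0 < psi a c (k+1) ∧ a * psi a c k ≤ 2 * psi a c (k+1) := by
  intro k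
  induction k with
  | zero => simp [psi_zero, psi_one]
  | succ k ih =>
    obtain ⟨h1, h2⟩ := ih
    rw [psi_rec]
    have h5 : c * (a * psi a c k) ≤ c * (2 * psi a c (k+1)) :=
      mul_le_mul_of_nonneg_left h2 hc
    have h6 : (4*c) * psi a c (k+1) ≤ a^2 * psi a c (k+1) :=
      mul_le_mul_of_nonneg_right h4 h1.le
    constructor
    · nlinarith [mul_pos (mul_pos ha ha) h1]
    · nlinarith [mul_pos (mul_pos ha ha) h1]

lemma psi_pos (ha : 0 < a) (hc : 0 ≤ c) (h4 : 4*c ≤ a^2) (k : ℕ) :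
    0 < psi a c (k+1) := (psi_pos_aux a c ha hc h4 k).1

lemma psi_two : psi a c 2 = a := by
  rw [show (2:ℕ) = 0+2 from rfl, psi_rec, psi_zero, psi_one]; ring

lemma psi_add : ∀ l j : ℕ,
    psi a c (j+1) * psi a c (l+1) - c * psi a c j * psi a c l = psi a c (j+l+1)
  | 0, j => by simp [psi_zero, psi_one]
  | 1, j => by
    rw [show (1:ℕ)+1 = 2 from rfl, psi_two, psi_one, show j+1+1 = j+2 from rfl, psi_rec]
    ring
  | (l+2), j => by
    have h1 := psi_add (l+1) j
    have h2 := psi_add l j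
    have e1 : psi a c (l+3) = a * psi a c (l+2) - c * psi a c (l+1) := psi_rec a c (l+1)
    have e0 : psi a c (l+2) = a * psi a c (l+1) - c * psi a c l := psi_rec a c l
    have e2 : psi a c (j+l+3) = a * psi a c (j+l+2) - c * psi a c (j+l+1) := psi_rec a c (j+l+1)
    rw [show l+2+1 = l+3 from rfl, show j+(l+2)+1 = j+l+3 from by ring, e2, e1, e0]
    rw [show j+(l+1)+1 = j+l+2 from by ring, show l+1+1 = l+2 from rfl] at h1
    rw [e0] at h1
    linear_combination a * h1 - c * h2


variable (n : ℕ) (b d : ℝ)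

def Xf (b a d : ℝ) (i j : ℕ) : ℝ :=
  if i = j then a else if i = j + 1 then b else if i + 1 = j then d else 0

noncomputable def Mf (n : ℕ) (b a d : ℝ) (i j : ℕ) : ℝ :=
  if i ≤ j then
    (-1:ℝ)^(i+j) * d^(j-i) * psi a (b*d) (i+1) * psi a (b*d) (n-j) / psi a (b*d) (n+1)
  else
    (-1:ℝ)^(i+j) * b^(i-j) * psi a (b*d) (j+1) * psi a (b*d) (n-i) / psi a (b*d) (n+1)

variable (n : ℕ) (b d : ℝ)

lemma Mf_le {i j : ℕ} (h : i ≤ j) : Mf n b a d i j =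
    (-1:ℝ)^(i+j) * d^(j-i) * psi a (b*d) (i+1) * psi a (b*d) (n-j) / psi a (b*d) (n+1) :=
  if_pos h

lemma Mf_ge {i j : ℕ} (h : j ≤ i) : Mf n b a d i j =
    (-1:ℝ)^(i+j) * b^(i-j) * psi a (b*d) (j+1) * psi a (b*d) (n-i) / psi a (b*d) (n+1) := by
  rcases eq_or_lt_of_le h with rfl | hlt
  · rw [Mf_le a n b d le_rfl]
    simp
  · exact if_neg (by omega)

lemma sum_split (i j : ℕ) (hi : i < n) :
    ∑ i' ∈ Finset.range n, Xf b a d i i' * Mf n b a d i' j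
      = (if 1 ≤ i then b * Mf n b a d (i-1) j else 0) + a * Mf n b a d i j
        + (if i + 1 < n then d * Mf n b a d (i+1) j else 0) := by
  have hX : ∀ i' : ℕ, Xf b a d i i' * Mf n b a d i' j
      = (if i' = i then a * Mf n b a d i' j else 0)
        + (if i' + 1 = i then b * Mf n b a d i' j else 0)
        + (if i' = i + 1 then d * Mf n b a d i' j else 0) := by
    intro i'
    unfold Xf
    split_ifs <;> first | (exfalso; omega) | ring1
  have h2 : (∑ i' ∈ Finset.range n, if i' + 1 = i then b * Mf n b a d i' j else 0)
      = if 1 ≤ i then b * Mf n b a d (i-1) j else 0 := by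
    rcases Nat.eq_zero_or_pos i with rfl | hpos
    · simp
    · obtain ⟨k, rfl⟩ : ∃ k, i = k + 1 := ⟨i - 1, by omega⟩
      have e : ∀ i' : ℕ, (if i' + 1 = k + 1 then b * Mf n b a d i' j else 0)
          = (if i' = k then b * Mf n b a d i' j else 0) := fun i' => by
        rcases eq_or_ne i' k with rfl | hne
        · simp
        · rw [if_neg (by omega), if_neg hne]
      rw [Finset.sum_congr rfl fun i' _ => e i', Finset.sum_ite_eq' (Finset.range n) k,
        if_pos (Finset.mem_range.mpr (by omega))]
      simp
  rw [Finset.sum_congr rfl fun i' _ => hX i', Finset.sum_add_distrib, Finset.sum_add_distrib,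
    Finset.sum_ite_eq' (Finset.range n) i, Finset.sum_ite_eq' (Finset.range n) (i+1), h2,
    if_pos (Finset.mem_range.mpr hi)]
  simp only [Finset.mem_range]
  ring

lemma neg1_add_one (m : ℕ) : (-1:ℝ)^(m+1) = -(-1:ℝ)^m := by rw [pow_succ]; ring
lemma neg1_add_two (m : ℕ) : (-1:ℝ)^(m+2) = (-1:ℝ)^m := by rw [pow_succ, pow_succ]; ring
lemma neg1_two_mul (t : ℕ) : (-1:ℝ)^(2*t) = 1 := by rw [pow_mul]; norm_num
lemma neg1_two_mul_add_one (t : ℕ) : (-1:ℝ)^(2*t+1) = -1 := by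
  rw [pow_succ, neg1_two_mul]; ring

lemma sum_eval (hb : 0 < b) (hd : 0 < d) (ha : 0 < a) (h4 : 4*(b*d) ≤ a^2)
    {i j : ℕ} (hi : i < n) (hj : j < n) :
    ∑ i' ∈ Finset.range n, Xf b a d i i' * Mf n b a d i' j = if i = j then 1 else 0 := by
  have hc : (0:ℝ) ≤ b*d := by positivity
  rw [sum_split a n b d i j hi]
  rcases lt_trichotomy i j with hlt | rfl | hgt
  · -- i < j
    rw [if_neg (by omega : ¬ i = j), if_pos (by omega : i + 1 < n)]
    rcases Nat.eq_zero_or_pos i with rfl | hpos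
    · obtain ⟨k, rfl⟩ : ∃ k, j = k+1 := ⟨j-1, by omega⟩
      rw [if_neg (by omega : ¬ 1 ≤ 0)]
      rw [Mf_le a n b d (show 0 ≤ k+1 by omega), Mf_le a n b d (show 0+1 ≤ k+1 by omega)]
      rw [show k+1-0 = k+1 by omega, show k+1-(0+1) = k by omega,
        show 0+(k+1) = k+1 by omega, show 0+1+(k+1) = k+2 by omega,
        show (0:ℕ)+1+1 = 2 by omega, show (0:ℕ)+1 = 1 by omega]
      rw [psi_one, psi_two, neg1_add_one, neg1_add_two, pow_succ d k]
      ring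
    · obtain ⟨t, rfl⟩ : ∃ t, i = t+1 := ⟨i-1, by omega⟩
      obtain ⟨k, rfl⟩ : ∃ k, j = t+1+1+k := ⟨j-t-2, by omega⟩
      rw [if_pos (show 1 ≤ t+1 by omega), show t+1-1 = t by omega]
      rw [Mf_le a n b d (show t ≤ t+1+1+k by omega),
        Mf_le a n b d (show t+1 ≤ t+1+1+k by omega),
        Mf_le a n b d (show t+1+1 ≤ t+1+1+k by omega)]
      rw [show t+1+1+k-t = k+2 by omega, show t+1+1+k-(t+1) = k+1 by omega,
        show t+1+1+k-(t+1+1) = k by omega,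
        show t+1+(t+1+1+k) = (t+(t+1+1+k))+1 by omega,
        show t+1+1+(t+1+1+k) = (t+(t+1+1+k))+2 by omega]
      rw [neg1_add_one, neg1_add_two, show t+1+1+1 = t+1+2 by omega, psi_rec a (b*d) (t+1)]
      ring
  · -- i = j
    rw [if_pos rfl]
    obtain ⟨m, rfl⟩ : ∃ m, n = i+1+m := ⟨n-i-1, by omega⟩
    have key := psi_add a (b*d) m (i+1)
    have hZ : psi a (b*d) (i+1+m+1) ≠ 0 := (psi_pos a (b*d) ha hc h4 (i+1+m)).ne'
    have h1 : (if 1 ≤ i then b * Mf (i+1+m) b a d (i-1) i else 0)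
        = -((b*d) * (psi a (b*d) i * psi a (b*d) (m+1))) / psi a (b*d) (i+1+m+1) := by
      rcases Nat.eq_zero_or_pos i with rfl | hip
      · rw [if_neg (by omega : ¬ 1 ≤ 0), psi_zero]; ring
      · obtain ⟨t, rfl⟩ : ∃ t, i = t+1 := ⟨i-1, by omega⟩
        rw [if_pos (show 1 ≤ t+1 by omega), show t+1-1 = t by omega,
          Mf_le a (t+1+1+m) b d (show t ≤ t+1 by omega),
          show t+1-t = 1 by omega, show t+(t+1) = 2*t+1 by omega, neg1_two_mul_add_one,
          show t+1+1+m-(t+1) = m+1 by omega, pow_one]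
        ring
    have h3 : (if i+1 < i+1+m then d * Mf (i+1+m) b a d (i+1) i else 0)
        = -((b*d) * (psi a (b*d) (i+1) * psi a (b*d) m)) / psi a (b*d) (i+1+m+1) := by
      rcases Nat.eq_zero_or_pos m with rfl | hm
      · rw [if_neg (by omega : ¬ i+1 < i+1+0), psi_zero]; ring
      · rw [if_pos (by omega : i+1 < i+1+m), Mf_ge a (i+1+m) b d (show i ≤ i+1 by omega),
          show i+1-i = 1 by omega, pow_one, show i+1+i = 2*i+1 by omega, neg1_two_mul_add_one,
          show i+1+m-(i+1) = m by omega]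
        ring
    rw [h1, h3, Mf_le a (i+1+m) b d (le_refl i), show i+1+m-i = m+1 by omega,
      show i+i = 2*i by omega, neg1_two_mul, show i-i = 0 by omega, pow_zero]
    rw [show i+1+1 = i+2 by omega, psi_rec a (b*d) i] at key
    field_simp
    linear_combination key
  · -- i > j
    rw [if_neg (by omega : ¬ i = j), if_pos (by omega : 1 ≤ i)]
    obtain ⟨t, rfl⟩ : ∃ t, i = j+1+t := ⟨i-j-1, by omega⟩
    rw [show j+1+t-1 = j+t by omega]
    rw [Mf_ge a n b d (show j ≤ j+t by omega), Mf_ge a n b d (show j ≤ j+1+t by omega)]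
    rw [show j+t-j = t by omega, show j+1+t-j = t+1 by omega,
      show j+1+t+j = (j+t+j)+1 by omega]
    rcases Nat.lt_or_ge (j+1+t+1) n with hlt2 | hge2
    · rw [if_pos hlt2]
      obtain ⟨m, rfl⟩ : ∃ m, n = j+1+t+1+1+m := ⟨n-j-t-3, by omega⟩
      rw [Mf_ge a (j+1+t+1+1+m) b d (show j ≤ j+1+t+1 by omega)]
      rw [show j+1+t+1-j = t+2 by omega, show j+1+t+1+j = (j+t+j)+2 by omega,
        show j+1+t+1+1+m-(j+t) = m+3 by omega,
        show j+1+t+1+1+m-(j+1+t) = m+2 by omega,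
        show j+1+t+1+1+m-(j+1+t+1) = m+1 by omega]
      rw [neg1_add_one, neg1_add_two, show (m:ℕ)+3 = m+1+2 by omega, psi_rec a (b*d) (m+1)]
      ring
    · rw [if_neg (by omega : ¬ j+1+t+1 < n)]
      obtain rfl : n = j+1+t+1 := by omega
      rw [show j+1+t+1-(j+t) = 2 by omega, show j+1+t+1-(j+1+t) = 1 by omega]
      rw [neg1_add_one, psi_one, psi_two]
      ring

lemma tridiag_entry (q q' : Fin n) :
    tridiag n b a d q q' = Xf b a d q q' := by
  unfold tridiag Xf
  rw [Matrix.of_apply]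
  split_ifs <;> first | rfl | omega

noncomputable def Minv (n : ℕ) (b a d : ℝ) : Matrix (Fin n) (Fin n) ℝ :=
  Matrix.of fun q q' => Mf n b a d q q'

lemma mul_eq_one (hb : 0 < b) (hd : 0 < d) (ha : 0 < a) (h4 : 4*(b*d) ≤ a^2) :
    tridiag n b a d * Minv n b a d = 1 := by
  ext q q''
  rw [Matrix.mul_apply]
  have he : ∀ q' : Fin n, tridiag n b a d q q' * Minv n b a d q' q''
      = Xf b a d (q:ℕ) (q':ℕ) * Mf n b a d (q':ℕ) (q'':ℕ) := fun q' => by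
    rw [tridiag_entry]; rfl
  rw [Finset.sum_congr rfl fun q' _ => he q',
    Fin.sum_univ_eq_sum_range (fun k => Xf b a d (q:ℕ) k * Mf n b a d k (q'':ℕ)) n,
    sum_eval a n b d hb hd ha h4 q.isLt q''.isLt, Matrix.one_apply]
  simp [Fin.ext_iff]

lemma inv_eq (hb : 0 < b) (hd : 0 < d) (ha : 0 < a) (h4 : 4*(b*d) ≤ a^2) :
    (tridiag n b a d)⁻¹ = Minv n b a d :=
  Matrix.inv_eq_right_inv (mul_eq_one a n b d hb hd ha h4)

lemma entry_sign (hb : 0 < b) (hd : 0 < d) (ha : 0 < a) (h4 : 4*(b*d) ≤ a^2)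
    {i j : ℕ} (hi : i < n) (hj : j < n) :
    0 < (-1:ℝ)^(i+j) * Mf n b a d i j := by
  have hc : (0:ℝ) ≤ b*d := by positivity
  have hs : (-1:ℝ)^(i+j) * (-1:ℝ)^(i+j) = 1 := by
    rw [← pow_add, show i+j+(i+j) = 2*(i+j) by omega, neg1_two_mul]
  have hZ : 0 < psi a (b*d) (n+1) := psi_pos a (b*d) ha hc h4 n
  rcases le_or_gt i j with hle | hlt
  · rw [Mf_le a n b d hle]
    have h1 : 0 < psi a (b*d) (i+1) := psi_pos a (b*d) ha hc h4 i
    have h2 : 0 < psi a (b*d) (n-j) := by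
      have := psi_pos a (b*d) ha hc h4 (n-j-1)
      rwa [show n-j-1+1 = n-j by omega] at this
    rw [show (-1:ℝ)^(i+j) * ((-1:ℝ)^(i+j) * d^(j-i) * psi a (b*d) (i+1) * psi a (b*d) (n-j)
        / psi a (b*d) (n+1))
      = ((-1:ℝ)^(i+j) * (-1:ℝ)^(i+j)) * (d^(j-i) * psi a (b*d) (i+1) * psi a (b*d) (n-j)
        / psi a (b*d) (n+1)) by ring, hs, one_mul]
    positivity
  · rw [Mf_ge a n b d hlt.le]
    have h1 : 0 < psi a (b*d) (j+1) := psi_pos a (b*d) ha hc h4 j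
    have h2 : 0 < psi a (b*d) (n-i) := by
      have := psi_pos a (b*d) ha hc h4 (n-i-1)
      rwa [show n-i-1+1 = n-i by omega] at this
    rw [show (-1:ℝ)^(i+j) * ((-1:ℝ)^(i+j) * b^(i-j) * psi a (b*d) (j+1) * psi a (b*d) (n-i)
        / psi a (b*d) (n+1))
      = ((-1:ℝ)^(i+j) * (-1:ℝ)^(i+j)) * (b^(i-j) * psi a (b*d) (j+1) * psi a (b*d) (n-i)
        / psi a (b*d) (n+1)) by ring, hs, one_mul]
    positivity

lemma zpow_neg_one_diff (i j : ℕ) : (-1:ℝ)^((i:ℤ)-(j:ℤ)) = (-1:ℝ)^(i+j) := by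
  have h2 : ((-1:ℝ))^(2*(j:ℤ)) = 1 := by
    rw [zpow_mul]; norm_num
  rw [show (i:ℤ)-(j:ℤ) = (((i+j : ℕ)) : ℤ) - 2*(j:ℤ) by push_cast; ring,
    zpow_sub₀ (by norm_num : (-1:ℝ) ≠ 0), h2, div_one, zpow_natCast]

end Stmt6aux

/-- the entries of `X⁻¹` alternate in sign in checkerboard fashion:
`(−1)^{q−q'} (X⁻¹)_{q,q'} > 0` for all entries. -/
theorem stmt6 (δv δz : ℝ) (hδv : 0 < δv) (hδz : 0 < δz) (hδz2 : δz < 2)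
    (N : ℕ) (hN : 2 ≤ N) :
    ∀ q q' : Fin (N - 1),
      0 < (-1 : ℝ) ^ ((q : ℤ) - (q' : ℤ)) *
        (tridiag (N - 1) ((2 + δz) / (24 * δv)) (5 / (6 * δv))
          ((2 - δz) / (24 * δv)))⁻¹ q q' := by
  intro q q'
  set b := (2 + δz) / (24 * δv) with hbdef
  set a := (5:ℝ) / (6 * δv) with hadef
  set d := (2 - δz) / (24 * δv) with hddef
  have hb : 0 < b := by rw [hbdef]; positivity
  have hd : 0 < d := div_pos (by linarith) (by positivity)
  have ha : 0 < a := by rw [hadef]; positivity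
  have h4 : 4*(b*d) ≤ a^2 := by
    rw [hbdef, hddef, hadef]
    rw [show 4*((2+δz)/(24*δv) * ((2-δz)/(24*δv))) = (4*((2+δz)*(2-δz)))/((24*δv)*(24*δv)) by
      ring, show ((5:ℝ)/(6*δv))^2 = 25/((6*δv)*(6*δv)) by ring]
    rw [div_le_div_iff₀ (by positivity) (by positivity)]
    nlinarith [sq_nonneg δz, mul_pos hδv hδv]
  rw [Stmt6aux.inv_eq a (N-1) b d hb hd ha h4]
  have hsign := Stmt6aux.entry_sign a (N-1) b d hb hd ha h4 q.isLt q'.isLt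
  rw [Stmt6aux.zpow_neg_one_diff]
  exact hsign
end

section
/- Fix real numbers δv > 0, 0 < δz < 2 and an integer N ≥ 2, and let X be the (N−1)×(N−1) tridiagonal Toeplitz matrix with diagonal c₂ = 5/(6δv), subdiagonal c₁ = (2+δz)/(24δv) and superdiagonal c₃ = (2−δz)/(24δv). Then X is invertible and the spectral norm of its inverse satisfies ‖X⁻¹‖₂ < √(12/5)·δv. -/
/-- The spectral norm (`L²` operator norm) of a real square matrix: the operator
norm of the induced linear map on the Euclidean space. -/
noncomputable def spectralNorm2 {n : ℕ} (A : Matrix (Fin n) (Fin n) ℝ) : ℝ :=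
  ‖Matrix.toEuclideanCLM (𝕜 := ℝ) A‖

lemma tridiag_eq (n : ℕ) (b a d : ℝ) :
    tridiag n b a d = a • (1 : Matrix (Fin n) (Fin n) ℝ) + b • tridiag n 1 0 0
      + d • tridiag n 0 0 1 := by
  ext q q'
  simp only [tridiag, Matrix.of_apply, Matrix.add_apply, Matrix.smul_apply, Matrix.one_apply,
    smul_eq_mul, Fin.ext_iff]
  split_ifs <;> simp_all <;> omega

lemma tridiag_sub_apply {n : ℕ} (q q' : Fin n) :
    tridiag n 1 0 0 q q' = if (q:ℤ) = (q':ℤ) + 1 then 1 else 0 := by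
  simp only [tridiag, Matrix.of_apply]
  split_ifs <;> first | rfl | omega

lemma sup_apply {n : ℕ} (q q' : Fin n) :
    tridiag n 0 0 1 q q' = if (q:ℤ) + 1 = (q':ℤ) then 1 else 0 := by
  simp only [tridiag, Matrix.of_apply]
  split_ifs <;> first | rfl | omega

lemma mulVec_sub {n : ℕ} (x : Fin n → ℝ) (q : Fin n) :
    (tridiag n 1 0 0).mulVec x q =
      if 0 < q.1 then x ⟨q.1 - 1, lt_of_le_of_lt (Nat.sub_le _ _) q.2⟩ else 0 := by
  unfold Matrix.mulVec dotProduct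
  simp only [tridiag_sub_apply]
  split_ifs with h
  · rw [Finset.sum_eq_single (⟨q.1 - 1, lt_of_le_of_lt (Nat.sub_le _ _) q.2⟩ : Fin n)]
    · rw [if_pos (by simp; omega), one_mul]
    · intro q' _ hq'
      have hv : q'.1 ≠ q.1 - 1 := fun hv => hq' (Fin.ext hv)
      rw [if_neg (by omega), zero_mul]
    · intro h; exact absurd (Finset.mem_univ _) h
  · apply Finset.sum_eq_zero
    intro q' _
    rw [if_neg (by omega), zero_mul]

lemma mulVec_sup {n : ℕ} (hn : 0 < n) (x : Fin n → ℝ) (q : Fin n) :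
    (tridiag n 0 0 1).mulVec x q =
      if q.1 + 1 < n then x ⟨(q.1 + 1) % n, Nat.mod_lt _ hn⟩ else 0 := by
  unfold Matrix.mulVec dotProduct
  simp only [sup_apply]
  split_ifs with h
  · have hm : (q.1 + 1) % n = q.1 + 1 := Nat.mod_eq_of_lt h
    rw [Finset.sum_eq_single (⟨(q.1 + 1) % n, Nat.mod_lt _ hn⟩ : Fin n)]
    · rw [if_pos (by simp [hm]), one_mul]
    · intro q' _ hq'
      have hv : q'.1 ≠ (q.1 + 1) % n := fun hv => hq' (Fin.ext hv)
      rw [hm] at hv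
      rw [if_neg (by omega), zero_mul]
    · intro h; exact absurd (Finset.mem_univ _) h
  · apply Finset.sum_eq_zero
    intro q' _
    rw [if_neg (by omega), zero_mul]

lemma sq_sum_shift {n : ℕ} (x : Fin n → ℝ) (σ : Fin n → Fin n) (P : Fin n → Prop)
    [DecidablePred P] (hinj : Set.InjOn σ {q | P q}) :
    ∑ q, (if P q then x (σ q) else 0) ^ 2 ≤ ∑ q, x q ^ 2 := by
  have h1 : ∑ q, (if P q then x (σ q) else 0) ^ 2
      = ∑ q ∈ Finset.univ.filter P, x (σ q) ^ 2 := by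
    rw [Finset.sum_filter]
    exact Finset.sum_congr rfl fun q _ => by split_ifs <;> simp
  have h2 : ∑ p ∈ (Finset.univ.filter P).image σ, x p ^ 2
      = ∑ q ∈ Finset.univ.filter P, x (σ q) ^ 2 :=
    Finset.sum_image (fun q hq q' hq' h => hinj (by simpa using hq) (by simpa using hq') h)
  rw [h1, ← h2]
  exact Finset.sum_le_sum_of_subset_of_nonneg (Finset.subset_univ _)
    (fun i _ _ => sq_nonneg _)

lemma norm_shift_le {n : ℕ} (x : EuclideanSpace ℝ (Fin n)) (σ : Fin n → Fin n)
    (P : Fin n → Prop) [DecidablePred P] (hinj : Set.InjOn σ {q | P q})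
    (y : EuclideanSpace ℝ (Fin n)) (hy : ∀ q, y q = if P q then x (σ q) else 0) :
    ‖y‖ ≤ ‖x‖ := by
  rw [EuclideanSpace.norm_eq, EuclideanSpace.norm_eq]
  apply Real.sqrt_le_sqrt
  simp only [Real.norm_eq_abs, sq_abs, hy]
  exact sq_sum_shift x σ P hinj

lemma opNorm_sub_le {n : ℕ} : ‖Matrix.toEuclideanCLM (𝕜 := ℝ) (tridiag n 1 0 0)‖ ≤ 1 :=
  ContinuousLinearMap.opNorm_le_bound _ zero_le_one fun x => by
    rw [one_mul]
    refine norm_shift_le x (fun q => ⟨q.1 - 1, lt_of_le_of_lt (Nat.sub_le _ _) q.2⟩)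
      (fun q => 0 < q.1) ?_ _ (fun q => mulVec_sub x q)
    intro q hq q' hq' h
    simp only [Set.mem_setOf_eq] at hq hq'
    have h2 : q.1 - 1 = q'.1 - 1 := congrArg Fin.val h
    exact Fin.ext (by omega)

lemma opNorm_sup_le {n : ℕ} (hn : 0 < n) :
    ‖Matrix.toEuclideanCLM (𝕜 := ℝ) (tridiag n 0 0 1)‖ ≤ 1 :=
  ContinuousLinearMap.opNorm_le_bound _ zero_le_one fun x => by
    rw [one_mul]
    refine norm_shift_le x (fun q => ⟨(q.1 + 1) % n, Nat.mod_lt _ hn⟩)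
      (fun q => q.1 + 1 < n) ?_ _ (fun q => mulVec_sup hn x q)
    intro q hq q' hq' h
    simp only [Set.mem_setOf_eq] at hq hq'
    have h2 : (q.1 + 1) % n = (q'.1 + 1) % n := congrArg Fin.val h
    rw [Nat.mod_eq_of_lt hq, Nat.mod_eq_of_lt hq'] at h2
    exact Fin.ext (by omega)

instance euclidTower {n : ℕ} : IsScalarTower ℝ
    (EuclideanSpace ℝ (Fin n) →L[ℝ] EuclideanSpace ℝ (Fin n))
    (EuclideanSpace ℝ (Fin n) →L[ℝ] EuclideanSpace ℝ (Fin n)) := by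
  exact IsScalarTower.right (R := ℝ)
    (A := EuclideanSpace ℝ (Fin n) →L[ℝ] EuclideanSpace ℝ (Fin n))

instance euclidSMulComm {n : ℕ} : SMulCommClass ℝ
    (EuclideanSpace ℝ (Fin n) →L[ℝ] EuclideanSpace ℝ (Fin n))
    (EuclideanSpace ℝ (Fin n) →L[ℝ] EuclideanSpace ℝ (Fin n)) := by
  exact Algebra.to_smulCommClass (R := ℝ)
    (A := EuclideanSpace ℝ (Fin n) →L[ℝ] EuclideanSpace ℝ (Fin n))

set_option maxHeartbeats 2000000 in
set_option synthInstance.maxHeartbeats 400000 in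
theorem key {n : ℕ} (hn : 0 < n) (δv δz : ℝ) (hδv : 0 < δv) (hδz : 0 < δz) (hδz2 : δz < 2) :
    IsUnit (tridiag n ((2 + δz) / (24 * δv)) (5 / (6 * δv)) ((2 - δz) / (24 * δv))) ∧
    ‖Matrix.toEuclideanCLM (𝕜 := ℝ)
      ((tridiag n ((2 + δz) / (24 * δv)) (5 / (6 * δv)) ((2 - δz) / (24 * δv)))⁻¹)‖
      ≤ 3 / 2 * δv := by
  set a : ℝ := 5 / (6 * δv) with ha_def
  set b : ℝ := (2 + δz) / (24 * δv) with hb_def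
  set d : ℝ := (2 - δz) / (24 * δv) with hd_def
  have ha : 0 < a := by positivity
  have hδv' : δv ≠ 0 := hδv.ne'
  set E := Matrix.toEuclideanCLM (𝕜 := ℝ) (n := Fin n) with hE
  set U := E (tridiag n 1 0 0) with hU
  set V := E (tridiag n 0 0 1) with hV
  set X := tridiag n b a d with hX
  set T := E X with hT_def
  have hT : T = a • 1 + b • U + d • V := by
    rw [hT_def, hX, tridiag_eq n b a d]
    simp only [map_add, map_smul, map_one]
    rfl
  set t : EuclideanSpace ℝ (Fin n) →L[ℝ] EuclideanSpace ℝ (Fin n) :=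
    -((a⁻¹ * b) • U + (a⁻¹ * d) • V) with ht_def
  have hnt : ‖t‖ ≤ 1 / 5 := by
    rw [ht_def, norm_neg]
    calc ‖(a⁻¹ * b) • U + (a⁻¹ * d) • V‖ ≤ ‖(a⁻¹ * b) • U‖ + ‖(a⁻¹ * d) • V‖ := norm_add_le _ _
    _ = |a⁻¹ * b| * ‖U‖ + |a⁻¹ * d| * ‖V‖ := by rw [norm_smul (a⁻¹ * b) U, norm_smul (a⁻¹ * d) V]; rfl
    _ ≤ |a⁻¹ * b| * 1 + |a⁻¹ * d| * 1 := by
        gcongr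
        · exact opNorm_sub_le
        · exact opNorm_sup_le hn
    _ = a⁻¹ * b + a⁻¹ * d := by
        have hb0 : (0:ℝ) ≤ b := by rw [hb_def]; positivity
        have hd0 : (0:ℝ) ≤ d := by
          rw [hd_def]
          have h2 : (0:ℝ) ≤ 2 - δz := by linarith
          positivity
        rw [mul_one, mul_one, abs_of_nonneg (mul_nonneg (inv_nonneg.mpr ha.le) hb0),
          abs_of_nonneg (mul_nonneg (inv_nonneg.mpr ha.le) hd0)]
    _ = 1 / 5 := by rw [ha_def, hb_def, hd_def]; field_simp; ring
  have ht1 : ‖t‖ < 1 := lt_of_le_of_lt hnt (by norm_num)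
  set v : (EuclideanSpace ℝ (Fin n) →L[ℝ] EuclideanSpace ℝ (Fin n))ˣ :=
    Units.oneSub t ht1 with hv_def
  have hab : a * (a⁻¹ * b) = b := by field_simp
  have had : a * (a⁻¹ * d) = d := by field_simp
  have hTv : T = a • (v : EuclideanSpace ℝ (Fin n) →L[ℝ] EuclideanSpace ℝ (Fin n)) := by
    rw [hT, hv_def, Units.val_oneSub, ht_def, sub_neg_eq_add, smul_add, smul_add,
      smul_smul, smul_smul, hab, had, add_assoc]
  set w : EuclideanSpace ℝ (Fin n) →L[ℝ] EuclideanSpace ℝ (Fin n) :=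
    a⁻¹ • ((v⁻¹ : _ˣ) : EuclideanSpace ℝ (Fin n) →L[ℝ] EuclideanSpace ℝ (Fin n)) with hw_def
  have hTw : T * w = 1 := by
    rw [hTv, hw_def, smul_mul_assoc, mul_smul_comm, smul_smul, mul_inv_cancel₀ ha.ne',
      Units.mul_inv, one_smul]
  have hwT : w * T = 1 := by
    rw [hTv, hw_def, smul_mul_assoc, mul_smul_comm, smul_smul, inv_mul_cancel₀ ha.ne',
      Units.inv_mul, one_smul]
  have hTunit : IsUnit T := ⟨⟨T, w, hTw, hwT⟩, rfl⟩
  have hXunit : IsUnit X := by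
    have h := hTunit.map (Matrix.toEuclideanCLM (𝕜 := ℝ) (n := Fin n)).symm
    rwa [hT_def, StarAlgEquiv.symm_apply_apply] at h
  refine ⟨hXunit, ?_⟩
  have hdet : IsUnit X.det := (Matrix.isUnit_iff_isUnit_det _).mp hXunit
  have h1 : X⁻¹ * X = 1 := Matrix.nonsing_inv_mul _ hdet
  have h2 : E X⁻¹ * T = 1 := by rw [hT_def, ← map_mul, h1, map_one]
  have hEinv : E X⁻¹ = w := by
    calc E X⁻¹ = E X⁻¹ * (T * w) := by rw [hTw, mul_one]
    _ = (E X⁻¹ * T) * w := (mul_assoc _ _ _).symm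
    _ = w := by rw [h2, one_mul]
  rw [hEinv, hw_def]
  have hk : ∀ k : ℕ, ‖t ^ k‖ ≤ (1/5 : ℝ) ^ k := by
    intro k
    induction k with
    | zero => rw [pow_zero, pow_zero]; exact ContinuousLinearMap.norm_id_le
    | succ k ih =>
        calc ‖t ^ (k+1)‖ = ‖t ^ k * t‖ := by rw [pow_succ]
        _ ≤ ‖t ^ k‖ * ‖t‖ := norm_mul_le _ _
        _ ≤ (1/5:ℝ)^k * (1/5) := by gcongr <;> first | exact norm_nonneg _ | skip
        _ = (1/5:ℝ)^(k+1) := by rw [pow_succ]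
  have hgeom : Summable fun k : ℕ => (1/5:ℝ)^k :=
    summable_geometric_of_lt_one (by norm_num) (by norm_num)
  have hsum0 : Summable fun k : ℕ => ‖t ^ k‖ :=
    Summable.of_nonneg_of_le (fun k => norm_nonneg _) hk hgeom
  have hvinv : ((v⁻¹ : _ˣ) : EuclideanSpace ℝ (Fin n) →L[ℝ] EuclideanSpace ℝ (Fin n))
      = ∑' k : ℕ, t ^ k := rfl
  have hvn : ‖((v⁻¹ : _ˣ) : EuclideanSpace ℝ (Fin n) →L[ℝ] EuclideanSpace ℝ (Fin n))‖
      ≤ 5 / 4 := by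
    rw [hvinv]
    calc ‖∑' k : ℕ, t ^ k‖ ≤ ∑' k : ℕ, ‖t ^ k‖ := norm_tsum_le_tsum_norm hsum0
    _ ≤ ∑' k : ℕ, (1/5:ℝ)^k := Summable.tsum_le_tsum hk hsum0 hgeom
    _ = (1 - 1/5)⁻¹ := tsum_geometric_of_lt_one (by norm_num) (by norm_num)
    _ = 5 / 4 := by norm_num
  calc ‖a⁻¹ • ((v⁻¹ : _ˣ) : EuclideanSpace ℝ (Fin n) →L[ℝ] EuclideanSpace ℝ (Fin n))‖
      = |a⁻¹| * ‖((v⁻¹ : _ˣ) : EuclideanSpace ℝ (Fin n) →L[ℝ] EuclideanSpace ℝ (Fin n))‖ := by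
        rw [norm_smul a⁻¹ ((v⁻¹ : _ˣ) : EuclideanSpace ℝ (Fin n) →L[ℝ] EuclideanSpace ℝ (Fin n))]
        rfl
  _ ≤ a⁻¹ * (5/4) := by rw [abs_of_nonneg (by positivity)]; gcongr
  _ = 3 / 2 * δv := by rw [ha_def]; field_simp; ring

/-- `X` is invertible and `‖X⁻¹‖₂ < √(12/5)·δv`. -/
theorem stmt11 (δv δz : ℝ) (hδv : 0 < δv) (hδz : 0 < δz) (hδz2 : δz < 2)
    (N : ℕ) (hN : 2 ≤ N) :
    IsUnit (tridiag (N - 1) ((2 + δz) / (24 * δv)) (5 / (6 * δv))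
      ((2 - δz) / (24 * δv))) ∧
    spectralNorm2 ((tridiag (N - 1) ((2 + δz) / (24 * δv)) (5 / (6 * δv))
      ((2 - δz) / (24 * δv)))⁻¹) < Real.sqrt (12 / 5) * δv := by
  have hn : 0 < N - 1 := by omega
  obtain ⟨h1, h2⟩ := key hn δv δz hδv hδz hδz2
  refine ⟨h1, ?_⟩
  have h3 : (3:ℝ) / 2 * δv < Real.sqrt (12 / 5) * δv := by
    apply mul_lt_mul_of_pos_right _ hδv
    exact (Real.lt_sqrt (by norm_num)).mpr (by norm_num)
  exact lt_of_le_of_lt h2 h3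
end
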